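/- Let Ω ⊆ ℝ^d be convex and f, g : Ω → ℝ twice differentiable with ρI ⪯ ∇²f ⪯ LI and ρI ⪯ ∇²g ⪯ LI on Ω for some 0 < ρ ≤ L < ∞. Suppose f attains its minimum at an interior point θ*_f of Ω and g attains its minimum at an interior point θ*_g of Ω. Then f and g are (log(2L/ρ), (ρ/2)‖θ*_f - θ*_g‖₂²)-close. -/

import Mathlib

open Set

lemma quad_bounds {d : ℕ} (Ω : Set (EuclideanSpace ℝ (Fin d))) (hΩ : Convex ℝ Ω)
    (f : EuclideanSpace ℝ (Fin d) → ℝ) (hf : ContDiff ℝ 2 f)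
    (ρ L : ℝ)
    (hess : ∀ θ ∈ Ω, ∀ v : EuclideanSpace ℝ (Fin d),
      ρ * ‖v‖ ^ 2 ≤ iteratedFDeriv ℝ 2 f θ ![v, v] ∧
        iteratedFDeriv ℝ 2 f θ ![v, v] ≤ L * ‖v‖ ^ 2)
    (θf : EuclideanSpace ℝ (Fin d)) (hθf : θf ∈ interior Ω)
    (hmin : IsMinOn f Ω θf) :
    ∀ θ ∈ Ω, ρ / 2 * ‖θ - θf‖ ^ 2 ≤ f θ - f θf ∧ f θ - f θf ≤ L / 2 * ‖θ - θf‖ ^ 2 := by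
  intro θ hθ
  set v := θ - θf with hv
  set γ : ℝ → EuclideanSpace ℝ (Fin d) := fun t => θf + t • v with hγ
  have hθfΩ : θf ∈ Ω := interior_subset hθf
  have hγmem : ∀ t ∈ Icc (0:ℝ) 1, γ t ∈ Ω := by
    intro t ht
    have := hΩ hθfΩ hθ (by linarith [ht.2] : (0:ℝ) ≤ 1 - t) ht.1 (by ring)
    convert this using 1
    simp only [hγ, hv]
    module
  -- first derivative along the line
  have hγd : ∀ t : ℝ, HasDerivAt γ v t := by
    intro t
    simpa [hγ] using ((hasDerivAt_id t).smul_const v).const_add θf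
  have hfd : Differentiable ℝ f := hf.differentiable (by norm_num)
  set ψ : ℝ → ℝ := fun t => fderiv ℝ f (γ t) v with hψ
  have hd1 : ∀ t : ℝ, HasDerivAt (fun s => f (γ s)) (ψ t) t := by
    intro t
    exact ((hfd (γ t)).hasFDerivAt).comp_hasDerivAt t (hγd t)
  -- second derivative
  have hf' : Differentiable ℝ (fderiv ℝ f) :=
    (hf.fderiv_right (m := 1) (by norm_num)).differentiable (by norm_num)
  set Q : ℝ → ℝ := fun t => fderiv ℝ (fderiv ℝ f) (γ t) v v with hQ
  have hd2 : ∀ t : ℝ, HasDerivAt ψ (Q t) t := by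
    intro t
    have h1 : HasFDerivAt (fun y => fderiv ℝ f y v)
        ((fderiv ℝ (fderiv ℝ f) (γ t)).flip v) (γ t) := by
      simpa using ((hf' (γ t)).hasFDerivAt.clm_apply (hasFDerivAt_const v (γ t)))
    exact h1.comp_hasDerivAt t (hγd t)
  have hQbound : ∀ t ∈ Icc (0:ℝ) 1, ρ * ‖v‖ ^ 2 ≤ Q t ∧ Q t ≤ L * ‖v‖ ^ 2 := by
    intro t ht
    have h := hess (γ t) (hγmem t ht) v
    rwa [iteratedFDeriv_two_apply] at h
  have hψ0 : ψ 0 = 0 := by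
    have hloc : IsLocalMin f θf := hmin.isLocalMin (mem_interior_iff_mem_nhds.mp hθf)
    have := hloc.fderiv_eq_zero
    simp [hψ, hγ, this]
  -- bounds on ψ on [0,1]
  have hψlb : ∀ t ∈ Icc (0:ℝ) 1, ρ * ‖v‖ ^ 2 * t ≤ ψ t := by
    intro t ht
    set G : ℝ → ℝ := fun s => ψ s - ρ * ‖v‖ ^ 2 * s with hG
    have hGd : ∀ s : ℝ, HasDerivAt G (Q s - ρ * ‖v‖ ^ 2) s := by
      intro s
      have := (hd2 s).sub ((hasDerivAt_id s).const_mul (ρ * ‖v‖ ^ 2)); simp only [mul_one] at this; exact this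
    have hmono : MonotoneOn G (Icc 0 1) := by
      apply monotoneOn_of_deriv_nonneg (convex_Icc 0 1)
      · exact fun s _ => ((hGd s).continuousAt).continuousWithinAt
      · exact fun s _ => ((hGd s).differentiableAt).differentiableWithinAt
      · intro s hs
        rw [interior_Icc] at hs
        rw [(hGd s).deriv]
        have := (hQbound s ⟨le_of_lt hs.1, le_of_lt hs.2⟩).1
        linarith
    have := hmono (left_mem_Icc.mpr zero_le_one) ht ht.1
    simp only [hG] at this
    rw [hψ0] at this
    linarith
  have hψub : ∀ t ∈ Icc (0:ℝ) 1, ψ t ≤ L * ‖v‖ ^ 2 * t := by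
    intro t ht
    set G : ℝ → ℝ := fun s => L * ‖v‖ ^ 2 * s - ψ s with hG
    have hGd : ∀ s : ℝ, HasDerivAt G (L * ‖v‖ ^ 2 - Q s) s := by
      intro s
      have := ((hasDerivAt_id s).const_mul (L * ‖v‖ ^ 2)).sub (hd2 s); simp only [mul_one] at this; exact this
    have hmono : MonotoneOn G (Icc 0 1) := by
      apply monotoneOn_of_deriv_nonneg (convex_Icc 0 1)
      · exact fun s _ => ((hGd s).continuousAt).continuousWithinAt
      · exact fun s _ => ((hGd s).differentiableAt).differentiableWithinAt
      · intro s hs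
        rw [interior_Icc] at hs
        rw [(hGd s).deriv]
        have := (hQbound s ⟨le_of_lt hs.1, le_of_lt hs.2⟩).2
        linarith
    have := hmono (left_mem_Icc.mpr zero_le_one) ht ht.1
    simp only [hG] at this
    rw [hψ0] at this
    linarith
  -- integrate once more
  have hγ0 : γ 0 = θf := by simp [hγ]
  have hγ1 : γ 1 = θ := by simp [hγ, hv]
  constructor
  · set H : ℝ → ℝ := fun s => f (γ s) - ρ * ‖v‖ ^ 2 * s ^ 2 / 2 with hH
    have hHd : ∀ s : ℝ, HasDerivAt H (ψ s - ρ * ‖v‖ ^ 2 * s) s := by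
      intro s
      have h2 : HasDerivAt (fun u : ℝ => ρ * ‖v‖ ^ 2 * u ^ 2 / 2) (ρ * ‖v‖ ^ 2 * s) s := by
        have := ((hasDerivAt_pow 2 s).const_mul (ρ * ‖v‖ ^ 2)).div_const 2
        have e : ρ * ‖v‖ ^ 2 * (((2:ℕ):ℝ) * s ^ (2 - 1)) / 2 = ρ * ‖v‖ ^ 2 * s := by push_cast; ring
        rw [e] at this; exact this
      exact (hd1 s).sub h2
    have hmono : MonotoneOn H (Icc 0 1) := by
      apply monotoneOn_of_deriv_nonneg (convex_Icc 0 1)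
      · exact fun s _ => ((hHd s).continuousAt).continuousWithinAt
      · exact fun s _ => ((hHd s).differentiableAt).differentiableWithinAt
      · intro s hs
        rw [interior_Icc] at hs
        rw [(hHd s).deriv]
        have := hψlb s ⟨le_of_lt hs.1, le_of_lt hs.2⟩
        linarith
    have := hmono (left_mem_Icc.mpr zero_le_one) (right_mem_Icc.mpr zero_le_one) zero_le_one
    simp only [hH, hγ0, hγ1] at this
    nlinarith [this]
  · set H : ℝ → ℝ := fun s => L * ‖v‖ ^ 2 * s ^ 2 / 2 - f (γ s) with hH
    have hHd : ∀ s : ℝ, HasDerivAt H (L * ‖v‖ ^ 2 * s - ψ s) s := by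
      intro s
      have h2 : HasDerivAt (fun u : ℝ => L * ‖v‖ ^ 2 * u ^ 2 / 2) (L * ‖v‖ ^ 2 * s) s := by
        have := ((hasDerivAt_pow 2 s).const_mul (L * ‖v‖ ^ 2)).div_const 2
        have e : L * ‖v‖ ^ 2 * (((2:ℕ):ℝ) * s ^ (2 - 1)) / 2 = L * ‖v‖ ^ 2 * s := by push_cast; ring
        rw [e] at this; exact this
      exact h2.sub (hd1 s)
    have hmono : MonotoneOn H (Icc 0 1) := by
      apply monotoneOn_of_deriv_nonneg (convex_Icc 0 1)
      · exact fun s _ => ((hHd s).continuousAt).continuousWithinAt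
      · exact fun s _ => ((hHd s).differentiableAt).differentiableWithinAt
      · intro s hs
        rw [interior_Icc] at hs
        rw [(hHd s).deriv]
        have := hψub s ⟨le_of_lt hs.1, le_of_lt hs.2⟩
        linarith
    have := hmono (left_mem_Icc.mpr zero_le_one) (right_mem_Icc.mpr zero_le_one) zero_le_one
    simp only [hH, hγ0, hγ1] at this
    nlinarith [this]

/-- `f` and `g` are `(ε,δ)`-close on the set `Ω`. -/
def IsCloseOn {α : Type*} (f g : α → ℝ) (Ω : Set α) (ε δ : ℝ) : Prop :=
  ∀ θ ∈ Ω, g θ - sInf (g '' Ω) ≤ Real.exp ε * ((f θ - sInf (f '' Ω)) + δ) ∧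
    f θ - sInf (f '' Ω) ≤ Real.exp ε * ((g θ - sInf (g '' Ω)) + δ)

theorem isCloseOn_of_strongly_convex {d : ℕ}
    (Ω : Set (EuclideanSpace ℝ (Fin d))) (hΩ : Convex ℝ Ω)
    (f g : EuclideanSpace ℝ (Fin d) → ℝ)
    (hf : ContDiff ℝ 2 f) (hg : ContDiff ℝ 2 g)
    (ρ L : ℝ) (hρ : 0 < ρ) (hρL : ρ ≤ L)
    (hessf : ∀ θ ∈ Ω, ∀ v : EuclideanSpace ℝ (Fin d),
      ρ * ‖v‖ ^ 2 ≤ iteratedFDeriv ℝ 2 f θ ![v, v] ∧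
        iteratedFDeriv ℝ 2 f θ ![v, v] ≤ L * ‖v‖ ^ 2)
    (hessg : ∀ θ ∈ Ω, ∀ v : EuclideanSpace ℝ (Fin d),
      ρ * ‖v‖ ^ 2 ≤ iteratedFDeriv ℝ 2 g θ ![v, v] ∧
        iteratedFDeriv ℝ 2 g θ ![v, v] ≤ L * ‖v‖ ^ 2)
    (θf θg : EuclideanSpace ℝ (Fin d))
    (hθf : θf ∈ interior Ω) (hθg : θg ∈ interior Ω)
    (hminf : IsMinOn f Ω θf) (hming : IsMinOn g Ω θg) :
    IsCloseOn f g Ω (Real.log (2 * L / ρ)) (ρ / 2 * ‖θf - θg‖ ^ 2) := by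
  have hL : 0 < L := lt_of_lt_of_le hρ hρL
  have hA : (0:ℝ) < 2 * L / ρ := by positivity
  have hexp : Real.exp (Real.log (2 * L / ρ)) = 2 * L / ρ := Real.exp_log hA
  have hfb := quad_bounds Ω hΩ f hf ρ L hessf θf hθf hminf
  have hgb := quad_bounds Ω hΩ g hg ρ L hessg θg hθg hming
  have hInff : sInf (f '' Ω) = f θf :=
    IsLeast.csInf_eq ⟨⟨θf, interior_subset hθf, rfl⟩, by
      rintro x ⟨y, hy, rfl⟩; exact hminf hy⟩
  have hInfg : sInf (g '' Ω) = g θg :=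
    IsLeast.csInf_eq ⟨⟨θg, interior_subset hθg, rfl⟩, by
      rintro x ⟨y, hy, rfl⟩; exact hming hy⟩
  intro θ hθ
  rw [hInff, hInfg, hexp]
  obtain ⟨hf1, hf2⟩ := hfb θ hθ
  obtain ⟨hg1, hg2⟩ := hgb θ hθ
  have htri1 : ‖θ - θg‖ ≤ ‖θ - θf‖ + ‖θf - θg‖ := norm_sub_le_norm_sub_add_norm_sub θ θf θg
  have htri2 : ‖θ - θf‖ ≤ ‖θ - θg‖ + ‖θf - θg‖ := by
    have := norm_sub_le_norm_sub_add_norm_sub θ θg θf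
    rwa [norm_sub_rev θg θf] at this
  have h1 : (0:ℝ) ≤ ‖θ - θf‖ := norm_nonneg _
  have h2 : (0:ℝ) ≤ ‖θ - θg‖ := norm_nonneg _
  have h3 : (0:ℝ) ≤ ‖θf - θg‖ := norm_nonneg _
  constructor
  · rw [div_mul_eq_mul_div, le_div_iff₀ hρ]
    have hsq : ‖θ - θg‖ ^ 2 ≤ 2 * ‖θ - θf‖ ^ 2 + 2 * ‖θf - θg‖ ^ 2 := by
      nlinarith [sq_nonneg (‖θ - θf‖ - ‖θf - θg‖)]
    have e1 := mul_le_mul_of_nonneg_right hg2 hρ.le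
    have e2 := mul_le_mul_of_nonneg_left hsq (by positivity : (0:ℝ) ≤ L * ρ / 2)
    have e3 := mul_le_mul_of_nonneg_left hf1 (by positivity : (0:ℝ) ≤ 2 * L)
    nlinarith [e1, e2, e3]
  · rw [div_mul_eq_mul_div, le_div_iff₀ hρ]
    have hsq : ‖θ - θf‖ ^ 2 ≤ 2 * ‖θ - θg‖ ^ 2 + 2 * ‖θf - θg‖ ^ 2 := by
      nlinarith [sq_nonneg (‖θ - θg‖ - ‖θf - θg‖)]
    have e1 := mul_le_mul_of_nonneg_right hf2 hρ.le
    have e2 := mul_le_mul_of_nonneg_left hsq (by positivity : (0:ℝ) ≤ L * ρ / 2)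
    have e3 := mul_le_mul_of_nonneg_left hg1 (by positivity : (0:ℝ) ≤ 2 * L)
    nlinarith [e1, e2, e3]
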